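/- Let Q be a finite measure on a space X, let K > Q(X), and let A ⊆ X be measurable with Q(A) > 0. Then sup{ ∫_X 1_A·h dQ : h ≥ 0 measurable, ∫_X e^h dQ ≤ K } = Q(A)·log(1 + (K − Q(X))/Q(A)). -/

import Mathlib

open Real Set MeasureTheory

/-- For a finite measure `Q`, `K > Q(X)` and measurable `A` with `Q(A) > 0`,
`sup{∫ 1_A h dQ : h ≥ 0, ∫ e^h dQ ≤ K} = Q(A)·log(1 + (K − Q(X))/Q(A))`. -/
theorem stmt11 {X : Type*} [MeasurableSpace X] (Q : Measure X) [IsFiniteMeasure Q]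
    (K : ℝ) (hK : (Q Set.univ).toReal < K)
    (A : Set X) (hA : MeasurableSet A) (hApos : 0 < (Q A).toReal) :
    sSup {r : ℝ | ∃ h : X → ℝ, Measurable h ∧ (∀ x, 0 ≤ h x) ∧
        Integrable (fun x => Real.exp (h x)) Q ∧
        (∫ x, Real.exp (h x) ∂Q) ≤ K ∧ r = ∫ x in A, h x ∂Q}
      = (Q A).toReal * Real.log (1 + (K - (Q Set.univ).toReal) / (Q A).toReal) := by
  set T := (Q Set.univ).toReal with hT
  set a := (Q A).toReal with ha
  set c := Real.log (1 + (K - T) / a) with hc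
  have hKT : 0 < K - T := by linarith
  have harg : (0:ℝ) < 1 + (K - T) / a := by positivity
  have hexpc : Real.exp c = 1 + (K - T) / a := Real.exp_log harg
  have hcnn : 0 ≤ c := Real.log_nonneg (by nlinarith [div_pos hKT hApos])
  have hKey : a * Real.exp c = a + (K - T) := by
    rw [hexpc]; field_simp
  have hQcompl : (Q Aᶜ).toReal = T - a := by
    rw [measure_compl hA (measure_ne_top Q A),
      ENNReal.toReal_sub_of_le (measure_mono (subset_univ A)) (measure_ne_top Q _)]
  -- upper bound on every element of the set
  have hub : ∀ r ∈ {r : ℝ | ∃ h : X → ℝ, Measurable h ∧ (∀ x, 0 ≤ h x) ∧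
        Integrable (fun x => Real.exp (h x)) Q ∧
        (∫ x, Real.exp (h x) ∂Q) ≤ K ∧ r = ∫ x in A, h x ∂Q}, r ≤ a * c := by
    rintro r ⟨h, hm, hnn, hint, hle, rfl⟩
    have hpt : ∀ x, h x ≤ (c - 1) + (Real.exp c)⁻¹ * Real.exp (h x) := by
      intro x
      have h2 := Real.add_one_le_exp (h x - c)
      rw [Real.exp_sub, div_eq_inv_mul] at h2
      linarith
    have hgint : Integrable (fun x => (c - 1) + (Real.exp c)⁻¹ * Real.exp (h x)) Q :=
      (integrable_const _).add (hint.const_mul _)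
    have hhint : Integrable h Q := by
      refine hgint.mono' hm.aestronglyMeasurable ?_
      filter_upwards with x
      rw [Real.norm_eq_abs, abs_of_nonneg (hnn x)]
      exact hpt x
    have step1 : (∫ x in A, h x ∂Q) ≤
        ∫ x in A, ((c - 1) + (Real.exp c)⁻¹ * Real.exp (h x)) ∂Q :=
      setIntegral_mono hhint.restrict hgint.restrict hpt
    have step2 : (∫ x in A, ((c - 1) + (Real.exp c)⁻¹ * Real.exp (h x)) ∂Q)
        = (c - 1) * a + (Real.exp c)⁻¹ * ∫ x in A, Real.exp (h x) ∂Q := by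
      rw [integral_add (integrable_const _) (hint.restrict.const_mul _),
        setIntegral_const, integral_const_mul, smul_eq_mul, measureReal_def, ← ha]
      ring
    have step3 : (∫ x in A, Real.exp (h x) ∂Q) ≤ K - (T - a) := by
      have hsplit := integral_add_compl hA hint
      have hcompl : (T - a) ≤ ∫ x in Aᶜ, Real.exp (h x) ∂Q := by
        have : (∫ x in Aᶜ, (1:ℝ) ∂Q) ≤ ∫ x in Aᶜ, Real.exp (h x) ∂Q :=
          setIntegral_mono (integrable_const _) hint.restrict
            (fun x => Real.one_le_exp (hnn x))
        rwa [setIntegral_const, measureReal_def, hQcompl, smul_eq_mul, mul_one] at this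
      linarith
    have hfin : (Real.exp c)⁻¹ * (K - (T - a)) = a := by
      have hne : Real.exp c ≠ 0 := (Real.exp_pos c).ne'
      field_simp
      linarith [hKey]
    calc (∫ x in A, h x ∂Q) ≤ (c - 1) * a + (Real.exp c)⁻¹ * ∫ x in A, Real.exp (h x) ∂Q := by
          rw [← step2]; exact step1
      _ ≤ (c - 1) * a + (Real.exp c)⁻¹ * (K - (T - a)) := by
          have := inv_nonneg.mpr (Real.exp_pos c).le
          nlinarith [step3]
      _ = a * c := by rw [hfin]; ring
  -- the optimizer is in the set
  have hmem : a * c ∈ {r : ℝ | ∃ h : X → ℝ, Measurable h ∧ (∀ x, 0 ≤ h x) ∧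
        Integrable (fun x => Real.exp (h x)) Q ∧
        (∫ x, Real.exp (h x) ∂Q) ≤ K ∧ r = ∫ x in A, h x ∂Q} := by
    refine ⟨A.indicator (fun _ => c), measurable_const.indicator hA,
      fun x => indicator_nonneg (fun _ _ => hcnn) x, ?_, ?_, ?_⟩
    · have heq : (fun x => Real.exp (A.indicator (fun _ => c) x))
          = fun x => A.indicator (fun _ => Real.exp c - 1) x + 1 := by
        funext x
        by_cases hx : x ∈ A <;> simp [hx]
      rw [heq]
      exact ((integrable_const _).indicator hA).add (integrable_const 1)
    · have heq : (fun x => Real.exp (A.indicator (fun _ => c) x))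
          = fun x => A.indicator (fun _ => Real.exp c - 1) x + 1 := by
        funext x
        by_cases hx : x ∈ A <;> simp [hx]
      rw [heq, integral_add ((integrable_const _).indicator hA) (integrable_const 1),
        integral_indicator_const _ hA, integral_const, smul_eq_mul, smul_eq_mul, mul_one,
        measureReal_def, measureReal_def, ← ha, ← hT, hexpc]
      have : a * ((1 + (K - T) / a) - 1) = K - T := by field_simp; ring
      nlinarith [this]
    · rw [setIntegral_congr_fun hA (fun x hx => indicator_of_mem hx _), setIntegral_const,
        smul_eq_mul, measureReal_def, ← ha, mul_comm]
  have hbdd : BddAbove {r : ℝ | ∃ h : X → ℝ, Measurable h ∧ (∀ x, 0 ≤ h x) ∧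
        Integrable (fun x => Real.exp (h x)) Q ∧
        (∫ x, Real.exp (h x) ∂Q) ≤ K ∧ r = ∫ x in A, h x ∂Q} := ⟨a * c, hub⟩
  exact le_antisymm (Real.sSup_le hub (by positivity)) (le_csSup hbdd hmem)
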